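/- Let N ≥ 2, 1 ≤ k < N, and s ∈ (1/2,1). Then for every p ≥ 1 there exists a positive, bounded, smooth function u ∈ C²(ℝ^N) with 𝓘_k^- u(x) + u(x)^p = 0 for every x ∈ ℝ^N. Explicitly: if p > 1 there exists α > 0 such that u(x) = α (1+|x|²)^{−s/(p−1)} is such a solution, and if p = 1 there exist β > 0 and b > 0 such that u(x) = b·e^{−β|x|²} is such a solution. -/

import Mathlib

open MeasureTheory Real Set

noncomputable section

abbrev E (N : ℕ) := EuclideanSpace ℝ (Fin N)

/-- The one-dimensional directional fractional operator `𝓘_ξ u(x)`. -/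
noncomputable def Iop (N : ℕ) (s Cs : ℝ) (u : E N → ℝ) (ξ x : E N) : ℝ :=
  Cs * ∫ τ in Ioi (0:ℝ), (u (x + τ • ξ) + u (x - τ • ξ) - 2 * u x) * τ ^ (-(1 + 2*s))

/-- `𝓘_k^- u(x)`: infimum over orthonormal `k`-frames. -/
noncomputable def IkMinus (N k : ℕ) (s Cs : ℝ) (u : E N → ℝ) (x : E N) : ℝ :=
  ⨅ ξ : {ξ : Fin k → E N // Orthonormal ℝ ξ}, ∑ i, Iop N s Cs u (ξ.1 i) x

open scoped RealInnerProductSpace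

set_option linter.unusedSectionVars false
set_option linter.unnecessarySimpa false
set_option linter.deprecated false


/-- Lipschitz bound from derivative bound on `Ici 0`. -/
theorem lipOn {g g' : ℝ → ℝ} (hd : ∀ t ∈ Ici (0:ℝ), HasDerivAt g (g' t) t)
    {K : ℝ} (hK : ∀ t ∈ Ici (0:ℝ), |g' t| ≤ K) {x y : ℝ} (hx : 0 ≤ x) (hy : 0 ≤ y) :
    |g x - g y| ≤ K * |x - y| := by
  have := Convex.norm_image_sub_le_of_norm_hasDerivWithin_le
    (f := g) (f' := g') (s := Ici (0:ℝ)) (C := K)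
    (fun t ht => (hd t ht).hasDerivWithinAt) (fun t ht => by simpa [Real.norm_eq_abs] using hK t ht)
    (convex_Ici 0) hy hx
  simpa [Real.norm_eq_abs] using this


theorem secondDiff {φ φ' : ℝ → ℝ} (hd : ∀ t ∈ Ici (0:ℝ), HasDerivAt φ (φ' t) t)
    (hmono : ∀ ⦃x y : ℝ⦄, 0 ≤ x → x ≤ y → φ' x ≤ φ' y)
    {M : ℝ} (hM : ∀ x ∈ Ici (0:ℝ), ∀ y ∈ Ici (0:ℝ), |φ' x - φ' y| ≤ M * |x - y|)
    {m h : ℝ} (hh : |h| ≤ m) :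
    0 ≤ φ (m + h) + φ (m - h) - 2 * φ m ∧
      φ (m + h) + φ (m - h) - 2 * φ m ≤ 2 * M * h ^ 2 := by
  have hM0 : 0 ≤ M := by
    have h1 := hM 1 (by norm_num) 0 (by norm_num)
    have h2 := abs_nonneg (φ' 1 - φ' 0)
    simp only [sub_zero, abs_one, mul_one] at h1
    linarith
  wlog hh0 : 0 ≤ h generalizing h
  · have := this (h := -h) (by simpa using hh) (by linarith [not_le.1 hh0])
    have e1 : m + -h = m - h := by ring
    have e2 : m - -h = m + h := by ring
    rw [e1, e2, neg_sq] at this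
    exact ⟨by linarith [this.1], by linarith [this.2]⟩
  have hm : 0 ≤ m := le_trans (abs_nonneg h) hh
  have hhm : h ≤ m := (abs_le.1 hh).2
  set ψ : ℝ → ℝ := fun x => φ (m + x) + φ (m - x) with hψ
  have hdψ : ∀ x ∈ Icc (0:ℝ) h, HasDerivAt ψ (φ' (m + x) - φ' (m - x)) x := by
    intro x hx
    have hi1 : HasDerivAt (fun y : ℝ => m + y) 1 x := by
      simpa using (hasDerivAt_id x).const_add m
    have hi2 : HasDerivAt (fun y : ℝ => m - y) (-1) x := by
      simpa using (hasDerivAt_id x).const_sub m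
    have h1 := (hd (m + x) (by simp only [mem_Ici]; linarith [hx.1])).comp x hi1
    have h2 := (hd (m - x) (by simp only [mem_Ici]; linarith [hx.2])).comp x hi2
    exact (h1.add h2).congr_deriv (by ring)
  have hψ0 : ψ 0 = 2 * φ m := by simp [hψ]; ring
  constructor
  · have hmon : MonotoneOn ψ (Icc 0 h) := by
      apply monotoneOn_of_deriv_nonneg (convex_Icc 0 h)
      · exact fun x hx => ((hdψ x hx).continuousAt).continuousWithinAt
      · intro x hx
        rw [interior_Icc] at hx
        exact ((hdψ x (Ioo_subset_Icc_self hx)).differentiableAt).differentiableWithinAt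
      · intro x hx
        rw [interior_Icc] at hx
        rw [(hdψ x (Ioo_subset_Icc_self hx)).deriv]
        have := hmono (by linarith [hx.1, hx.2, hhm] : (0:ℝ) ≤ m - x)
          (by linarith [hx.1] : m - x ≤ m + x)
        linarith
    have := hmon (left_mem_Icc.2 hh0) (right_mem_Icc.2 hh0) hh0
    rw [hψ0] at this
    simpa [hψ] using this
  · have hb := Convex.norm_image_sub_le_of_norm_hasDerivWithin_le
      (f := ψ) (f' := fun x => φ' (m + x) - φ' (m - x)) (s := Icc 0 h) (C := 2 * M * h)
      (fun x hx => (hdψ x hx).hasDerivWithinAt)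
      (fun x hx => by
        have hb2 := hM (m + x) (by simp only [mem_Ici]; linarith [hx.1])
          (m - x) (by simp only [mem_Ici]; linarith [hx.2])
        have hxx : |m + x - (m - x)| = 2 * x := by
          rw [show m + x - (m - x) = 2 * x by ring, abs_of_nonneg (by linarith [hx.1])]
        rw [hxx] at hb2
        rw [Real.norm_eq_abs]
        calc |φ' (m + x) - φ' (m - x)| ≤ M * (2 * x) := hb2
        _ ≤ 2 * M * h := by nlinarith [hx.1, hx.2])
      (convex_Icc 0 h) (left_mem_Icc.2 hh0) (right_mem_Icc.2 hh0)
    rw [hψ0] at hb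
    rw [Real.norm_eq_abs, Real.norm_eq_abs, sub_zero, abs_of_nonneg hh0] at hb
    have h3 : ψ h - 2 * φ m ≤ 2 * M * h * h := le_trans (le_abs_self _) hb
    calc φ (m + h) + φ (m - h) - 2 * φ m = ψ h - 2 * φ m := by simp [hψ]
    _ ≤ 2 * M * h * h := h3
    _ = 2 * M * h ^ 2 := by ring


theorem integrableCore {s : ℝ} (hs2 : 1/2 < s) (hs1 : s < 1) {f : ℝ → ℝ}
    (hc : ContinuousOn f (Ioi 0))
    {C₁ C₂ : ℝ} (h1 : ∀ τ ∈ Ioc (0:ℝ) 1, |f τ| ≤ C₁ * τ ^ 2)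
    (h2 : ∀ τ ∈ Ioi (1:ℝ), |f τ| ≤ C₂) :
    IntegrableOn (fun τ => f τ * τ ^ (-(1 + 2*s))) (Ioi (0:ℝ)) := by
  have hrc : ContinuousOn (fun τ : ℝ => f τ * τ ^ (-(1 + 2*s))) (Ioi 0) := by
    apply hc.mul
    intro τ hτ
    exact (Real.continuousAt_rpow_const τ _ (Or.inl (ne_of_gt hτ))).continuousWithinAt
  have hu : Ioc (0:ℝ) 1 ∪ Ioi 1 = Ioi 0 := Ioc_union_Ioi_eq_Ioi zero_le_one
  rw [← hu]
  apply IntegrableOn.union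
  · -- on Ioc 0 1
    have hint : IntegrableOn (fun τ : ℝ => C₁ * τ ^ (1 - 2*s)) (Ioc (0:ℝ) 1) := by
      have : IntervalIntegrable (fun τ : ℝ => τ ^ (1 - 2*s)) volume 0 1 :=
        intervalIntegral.intervalIntegrable_rpow' (by linarith)
      rw [intervalIntegrable_iff_integrableOn_Ioc_of_le zero_le_one] at this
      exact this.const_mul C₁
    apply Integrable.mono' hint
    · exact (hrc.mono (Ioc_subset_Ioi_self)).aestronglyMeasurable measurableSet_Ioc
    · filter_upwards [ae_restrict_mem measurableSet_Ioc] with τ hτ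
      have hτ0 : (0:ℝ) < τ := hτ.1
      rw [Real.norm_eq_abs, abs_mul, abs_of_nonneg (Real.rpow_nonneg hτ0.le _)]
      have : |f τ| * τ ^ (-(1 + 2*s)) ≤ C₁ * τ ^ 2 * τ ^ (-(1 + 2*s)) :=
        mul_le_mul_of_nonneg_right (h1 τ hτ) (Real.rpow_nonneg hτ0.le _)
      refine this.trans (le_of_eq ?_)
      rw [mul_assoc]
      congr 1
      rw [← Real.rpow_natCast τ 2, ← Real.rpow_add hτ0]
      congr 1; ring
  · -- on Ioi 1
    have hint : IntegrableOn (fun τ : ℝ => C₂ * τ ^ (-(1 + 2*s))) (Ioi (1:ℝ)) :=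
      (integrableOn_Ioi_rpow_of_lt (by linarith) one_pos).const_mul C₂
    apply Integrable.mono' hint
    · exact (hrc.mono (Ioi_subset_Ioi zero_le_one)).aestronglyMeasurable measurableSet_Ioi
    · filter_upwards [ae_restrict_mem measurableSet_Ioi] with τ hτ
      have hτ0 : (0:ℝ) < τ := lt_trans one_pos hτ
      rw [Real.norm_eq_abs, abs_mul, abs_of_nonneg (Real.rpow_nonneg hτ0.le _)]
      exact mul_le_mul_of_nonneg_right (h2 τ hτ) (Real.rpow_nonneg hτ0.le _)



theorem normsq_expand {N : ℕ} (x ξ : E N) (hξ : ‖ξ‖ = 1) (τ : ℝ) :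
    ‖x + τ • ξ‖ ^ 2 = (‖x‖ ^ 2 + τ ^ 2) + 2 * τ * ⟪x, ξ⟫ ∧
    ‖x - τ • ξ‖ ^ 2 = (‖x‖ ^ 2 + τ ^ 2) - 2 * τ * ⟪x, ξ⟫ := by
  have h1 : ‖τ • ξ‖ ^ 2 = τ ^ 2 := by
    rw [norm_smul, mul_pow, hξ, one_pow, mul_one, Real.norm_eq_abs, sq_abs]
  have h2 : ⟪x, τ • ξ⟫ = τ * ⟪x, ξ⟫ := real_inner_smul_right x ξ τ
  constructor
  · rw [norm_add_sq_real, h1, h2]; ring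
  · rw [norm_sub_sq_real, h1, h2]; ring

theorem exists_frame {N : ℕ} (k : ℕ) (hkN : k < N) (x : E N) :
    ∃ ξ : Fin k → E N, Orthonormal ℝ ξ ∧ ∀ i, ⟪x, ξ i⟫ = 0 := by
  have hrank : N ≤ Module.finrank ℝ ((ℝ ∙ x)ᗮ : Submodule ℝ (E N)) + 1 := by
    have h1 := Submodule.finrank_add_finrank_orthogonal (K := (ℝ ∙ x : Submodule ℝ (E N)))
    rw [finrank_euclideanSpace_fin] at h1
    have h2 : Module.finrank ℝ (ℝ ∙ x : Submodule ℝ (E N)) ≤ 1 := by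
      by_cases hx : x = 0
      · subst hx; rw [Submodule.span_zero_singleton]; simp
      · rw [finrank_span_singleton hx]
    omega
  have hk : k ≤ Module.finrank ℝ ((ℝ ∙ x)ᗮ : Submodule ℝ (E N)) := by omega
  let b := stdOrthonormalBasis ℝ ((ℝ ∙ x)ᗮ : Submodule ℝ (E N))
  refine ⟨fun i => (b (Fin.castLE hk i) : E N), ?_, ?_⟩
  · exact (b.orthonormal.comp_linearIsometry ((ℝ ∙ x)ᗮ : Submodule ℝ (E N)).subtypeₗᵢ).comp _ (Fin.castLE_injective hk)
  · intro i
    exact Submodule.mem_orthogonal_singleton_iff_inner_right.mp (b (Fin.castLE hk i)).2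

noncomputable def Jint (s : ℝ) (φ : ℝ → ℝ) (t : ℝ) : ℝ :=
  ∫ τ in Ioi (0:ℝ), (φ (t + τ ^ 2) - φ t) * τ ^ (-(1 + 2*s))

section radial
variable {s : ℝ} (hs2 : 1/2 < s) (hs1 : s < 1) {φ φ' : ℝ → ℝ}
  (hd : ∀ t ∈ Ici (0:ℝ), HasDerivAt φ (φ' t) t)
  (hmono : ∀ ⦃x y : ℝ⦄, 0 ≤ x → x ≤ y → φ' x ≤ φ' y)
  {L M B : ℝ}
  (hL : ∀ t ∈ Ici (0:ℝ), |φ' t| ≤ L)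
  (hM : ∀ x ∈ Ici (0:ℝ), ∀ y ∈ Ici (0:ℝ), |φ' x - φ' y| ≤ M * |x - y|)
  (hB : ∀ t ∈ Ici (0:ℝ), |φ t| ≤ B)


include hd hL in
theorem phi_contAt {t : ℝ} (ht : 0 ≤ t) : ContinuousAt φ t := (hd t ht).continuousAt

include hd hL in
theorem u_cont {N : ℕ} : Continuous (fun y : E N => φ (‖y‖ ^ 2)) := by
  rw [continuous_iff_continuousAt]
  intro y
  have h1 : ContinuousAt (fun y : E N => ‖y‖^2) y := (continuous_norm.pow 2).continuousAt
  exact ContinuousAt.comp (g := φ) (hd _ (mem_Ici.2 (by positivity))).continuousAt h1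

include hd hmono hL hM hB in
theorem Dbounds {N : ℕ} (x ξ : E N) (hξ : ‖ξ‖ = 1) (τ : ℝ) :
    2 * (φ (‖x‖^2 + τ^2) - φ (‖x‖^2)) ≤
      φ (‖x + τ • ξ‖^2) + φ (‖x - τ • ξ‖^2) - 2 * φ (‖x‖^2) ∧
    |φ (‖x + τ • ξ‖^2) + φ (‖x - τ • ξ‖^2) - 2 * φ (‖x‖^2)| ≤ (8*M*‖x‖^2 + 2*L) * τ^2 ∧
    |φ (‖x + τ • ξ‖^2) + φ (‖x - τ • ξ‖^2) - 2 * φ (‖x‖^2)| ≤ 4 * B := by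
  obtain ⟨e1, e2⟩ := normsq_expand x ξ hξ τ
  set m : ℝ := ‖x‖^2 + τ^2 with hm
  set h : ℝ := 2 * τ * ⟪x, ξ⟫ with hhdef
  have hinner : |⟪x, ξ⟫| ≤ ‖x‖ := by
    have := abs_real_inner_le_norm x ξ
    rwa [hξ, mul_one] at this
  have hhm : |h| ≤ m := by
    rw [hhdef, hm]
    have h1 : |2 * τ * ⟪x, ξ⟫| ≤ 2 * |τ| * ‖x‖ := by
      rw [abs_mul, abs_mul, abs_two]
      exact mul_le_mul_of_nonneg_left hinner (by positivity)
    refine h1.trans ?_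
    nlinarith [sq_nonneg (‖x‖ - |τ|), sq_abs τ]
  have hM0 : 0 ≤ M := by
    have h1 := hM 1 (by norm_num) 0 (by norm_num)
    have h2 := abs_nonneg (φ' 1 - φ' 0)
    simp only [sub_zero, abs_one, mul_one] at h1
    linarith
  have hL0 : 0 ≤ L := le_trans (abs_nonneg _) (hL 0 (by norm_num))
  have hB0 : 0 ≤ B := le_trans (abs_nonneg _) (hB 0 (by norm_num))
  have hsd := secondDiff hd hmono hM hhm
  have hlip : |φ m - φ (‖x‖^2)| ≤ L * τ^2 := by
    have := lipOn hd hL (by positivity : (0:ℝ) ≤ m) (by positivity : (0:ℝ) ≤ ‖x‖^2)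
    rwa [hm, show ‖x‖^2 + τ^2 - ‖x‖^2 = τ^2 by ring, abs_of_nonneg (sq_nonneg τ)] at this
  have hdecomp : φ (‖x + τ • ξ‖^2) + φ (‖x - τ • ξ‖^2) - 2 * φ (‖x‖^2)
      = (φ (m + h) + φ (m - h) - 2 * φ m) + 2 * (φ m - φ (‖x‖^2)) := by
    rw [e1, e2]; ring
  have hh2 : h^2 ≤ 4 * ‖x‖^2 * τ^2 := by
    rw [hhdef]
    have h2 : (⟪x, ξ⟫ : ℝ)^2 ≤ ‖x‖^2 := by
      nlinarith [sq_abs (⟪x, ξ⟫ : ℝ), hinner, abs_nonneg (⟪x, ξ⟫ : ℝ), norm_nonneg x]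
    nlinarith [sq_nonneg τ]
  refine ⟨by rw [hdecomp]; linarith [hsd.1], ?_, ?_⟩
  · rw [hdecomp]
    have habs : |(φ (m + h) + φ (m - h) - 2 * φ m) + 2 * (φ m - φ (‖x‖^2))|
        ≤ (2*M*h^2) + 2 * (L * τ^2) := by
      refine (abs_add_le _ _).trans ?_
      have hA : |φ (m + h) + φ (m - h) - 2 * φ m| ≤ 2*M*h^2 := by
        rw [abs_of_nonneg hsd.1]; exact hsd.2
      have hBB : |2 * (φ m - φ (‖x‖^2))| ≤ 2 * (L * τ^2) := by
        rw [abs_mul, abs_two]; linarith [hlip]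
      linarith
    refine habs.trans ?_
    nlinarith [sq_nonneg τ, hh2, hM0]
  · have b1 := abs_le.1 (hB _ (mem_Ici.2 (by positivity : (0:ℝ) ≤ ‖x + τ • ξ‖^2)))
    have b2 := abs_le.1 (hB _ (mem_Ici.2 (by positivity : (0:ℝ) ≤ ‖x - τ • ξ‖^2)))
    have b3 := abs_le.1 (hB _ (mem_Ici.2 (by positivity : (0:ℝ) ≤ ‖x‖^2)))
    rw [abs_le]
    constructor <;> [linarith [b1.1, b2.1, b3.2]; linarith [b1.2, b2.2, b3.1]]

include hd hmono hL hM hB in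
theorem integrable_g {N : ℕ} (x ξ : E N) (hξ : ‖ξ‖ = 1) (hs2 : 1/2 < s) (hs1 : s < 1) :
    IntegrableOn (fun τ : ℝ =>
      (φ (‖x + τ • ξ‖^2) + φ (‖x - τ • ξ‖^2) - 2 * φ (‖x‖^2)) * τ ^ (-(1 + 2*s)))
      (Ioi (0:ℝ)) := by
  have hu := u_cont (N := N) hd hL
  have c1 : Continuous (fun τ : ℝ => φ (‖x + τ • ξ‖^2)) :=
    hu.comp (continuous_const.add (continuous_id.smul continuous_const))
  have c2 : Continuous (fun τ : ℝ => φ (‖x - τ • ξ‖^2)) :=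
    hu.comp (continuous_const.sub (continuous_id.smul continuous_const))
  exact integrableCore hs2 hs1 ((c1.add c2).sub continuous_const).continuousOn
    (fun τ _ => (Dbounds hd hmono hL hM hB x ξ hξ τ).2.1)
    (fun τ _ => (Dbounds hd hmono hL hM hB x ξ hξ τ).2.2)

include hd hL hB in
theorem integrable_g0 (t : ℝ) (ht : 0 ≤ t) (hs2 : 1/2 < s) (hs1 : s < 1) :
    IntegrableOn (fun τ : ℝ => (φ (t + τ^2) - φ t) * τ ^ (-(1 + 2*s))) (Ioi (0:ℝ)) := by
  have c1 : Continuous (fun τ : ℝ => φ (t + τ^2)) := by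
    rw [continuous_iff_continuousAt]
    intro τ
    have h1 : ContinuousAt (fun τ : ℝ => t + τ^2) τ :=
      (continuous_const.add (continuous_id.pow 2)).continuousAt
    exact ContinuousAt.comp (g := φ)
      (hd _ (mem_Ici.2 (by positivity))).continuousAt h1
  refine integrableCore hs2 hs1 (C₁ := L) (C₂ := 2*B) (c1.sub continuous_const).continuousOn
    (fun τ _ => ?_) (fun τ _ => ?_)
  · have := lipOn hd hL (by positivity : (0:ℝ) ≤ t + τ^2) ht
    rwa [show t + τ^2 - t = τ^2 by ring, abs_of_nonneg (sq_nonneg τ)] at this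
  · have b1 := abs_le.1 (hB _ (mem_Ici.2 (by positivity : (0:ℝ) ≤ t + τ^2)))
    have b2 := abs_le.1 (hB _ (mem_Ici.2 ht))
    rw [abs_le]
    constructor <;> [linarith [b1.1, b2.2]; linarith [b1.2, b2.1]]

include hd hmono hL hM hB hs2 hs1 in
theorem Iop_ge {N : ℕ} (Cs : ℝ) (hCs : 0 < Cs) (x ξ : E N) (hξ : ‖ξ‖ = 1) :
    2 * Cs * Jint s φ (‖x‖^2) ≤ Iop N s Cs (fun y => φ (‖y‖^2)) ξ x := by
  rw [Iop, Jint]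
  rw [show 2 * Cs * ∫ τ in Ioi (0:ℝ), (φ (‖x‖^2 + τ^2) - φ (‖x‖^2)) * τ ^ (-(1 + 2*s))
      = Cs * ∫ τ in Ioi (0:ℝ), 2 * ((φ (‖x‖^2 + τ^2) - φ (‖x‖^2)) * τ ^ (-(1 + 2*s))) by
    rw [integral_const_mul]; ring]
  apply mul_le_mul_of_nonneg_left _ hCs.le
  apply setIntegral_mono_on
  · exact (integrable_g0 hd hL hB (‖x‖^2) (by positivity) hs2 hs1).const_mul 2
  · exact integrable_g hd hmono hL hM hB x ξ hξ hs2 hs1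
  · exact measurableSet_Ioi
  · intro τ hτ
    have hτ0 : (0:ℝ) < τ := hτ
    have hlow := (Dbounds hd hmono hL hM hB x ξ hξ τ).1
    have hw : (0:ℝ) ≤ τ ^ (-(1 + 2*s)) := Real.rpow_nonneg hτ0.le _
    calc 2 * ((φ (‖x‖^2 + τ^2) - φ (‖x‖^2)) * τ ^ (-(1 + 2*s)))
        = (2 * (φ (‖x‖^2 + τ^2) - φ (‖x‖^2))) * τ ^ (-(1 + 2*s)) := by ring
      _ ≤ (φ (‖x + τ • ξ‖^2) + φ (‖x - τ • ξ‖^2) - 2 * φ (‖x‖^2)) * τ ^ (-(1 + 2*s)) :=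
          mul_le_mul_of_nonneg_right hlow hw

theorem Iop_orth {N : ℕ} {s : ℝ} (Cs : ℝ) {φ : ℝ → ℝ} (x ξ : E N) (hξ : ‖ξ‖ = 1)
    (horth : ⟪x, ξ⟫ = 0) :
    Iop N s Cs (fun y => φ (‖y‖^2)) ξ x = 2 * Cs * Jint s φ (‖x‖^2) := by
  rw [Iop, Jint]
  have : ∀ τ : ℝ, (φ (‖x + τ • ξ‖^2) + φ (‖x - τ • ξ‖^2) - 2 * φ (‖x‖^2))
      = 2 * (φ (‖x‖^2 + τ^2) - φ (‖x‖^2)) := by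
    intro τ
    obtain ⟨e1, e2⟩ := normsq_expand x ξ hξ τ
    rw [e1, e2, horth]
    ring_nf
  simp only [this]
  rw [show (fun τ : ℝ => 2 * (φ (‖x‖^2 + τ^2) - φ (‖x‖^2)) * τ ^ (-(1 + 2*s)))
      = (fun τ : ℝ => 2 * ((φ (‖x‖^2 + τ^2) - φ (‖x‖^2)) * τ ^ (-(1 + 2*s)))) from
    funext fun τ => by ring]
  rw [integral_const_mul]
  ring

include hd hmono hL hM hB hs2 hs1 in
theorem IkMinus_eq {N : ℕ} (k : ℕ) (hkN : k < N) (Cs : ℝ) (hCs : 0 < Cs) (x : E N) :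
    IkMinus N k s Cs (fun y => φ (‖y‖^2)) x = k * (2 * Cs * Jint s φ (‖x‖^2)) := by
  obtain ⟨ξ₀, hon, hperp⟩ := exists_frame k hkN x
  haveI : Nonempty {ξ : Fin k → E N // Orthonormal ℝ ξ} := ⟨⟨ξ₀, hon⟩⟩
  have hval : ∀ ξ : {ξ : Fin k → E N // Orthonormal ℝ ξ},
      (k : ℝ) * (2 * Cs * Jint s φ (‖x‖^2)) ≤ ∑ i, Iop N s Cs (fun y => φ (‖y‖^2)) (ξ.1 i) x := by
    intro ξ
    have : ∀ i ∈ Finset.univ, 2 * Cs * Jint s φ (‖x‖^2)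
        ≤ Iop N s Cs (fun y => φ (‖y‖^2)) (ξ.1 i) x := fun i _ =>
      Iop_ge hs2 hs1 hd hmono hL hM hB Cs hCs x (ξ.1 i) (ξ.2.1 i)
    have hsum := Finset.sum_le_sum this
    rwa [Finset.sum_const, Finset.card_univ, Fintype.card_fin, nsmul_eq_mul] at hsum
  rw [IkMinus]
  apply le_antisymm
  · have hbdd : BddBelow (range fun ξ : {ξ : Fin k → E N // Orthonormal ℝ ξ} =>
        ∑ i, Iop N s Cs (fun y => φ (‖y‖^2)) (ξ.1 i) x) := by
      refine ⟨(k : ℝ) * (2 * Cs * Jint s φ (‖x‖^2)), ?_⟩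
      rintro y ⟨ξ, rfl⟩
      exact hval ξ
    refine ciInf_le_of_le hbdd ⟨ξ₀, hon⟩ (le_of_eq ?_)
    have heq : ∀ i ∈ Finset.univ, Iop N s Cs (fun y => φ (‖y‖^2)) (ξ₀ i) x
        = 2 * Cs * Jint s φ (‖x‖^2) := fun i _ =>
      Iop_orth Cs x (ξ₀ i) (hon.1 i) (hperp i)
    rw [Finset.sum_congr rfl heq, Finset.sum_const, Finset.card_univ, Fintype.card_fin,
      nsmul_eq_mul]
  · exact le_ciInf hval

end radial

-- power-case building blocks
section power
variable {γ α : ℝ} (hγ : 0 < γ) (hα : 0 < α)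

include hγ in
theorem pow_hd : ∀ t ∈ Ici (0:ℝ), HasDerivAt (fun t : ℝ => α * (1+t) ^ (-γ))
    (α * (-γ * (1+t) ^ (-γ-1))) t := by
  intro t ht
  have h1 : HasDerivAt (fun t : ℝ => 1 + t) 1 t := by
    simpa using (hasDerivAt_id t).const_add (1:ℝ)
  have h0 : (1:ℝ) + t ≠ 0 := by simp only [mem_Ici] at ht; positivity
  have h2 := h1.rpow_const (p := -γ) (Or.inl h0)
  have h3 := h2.const_mul α
  exact h3.congr_deriv (by ring)
include hγ in
theorem pow_hd' : ∀ t ∈ Ici (0:ℝ), HasDerivAt (fun t : ℝ => α * (-γ * (1+t) ^ (-γ-1)))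
    (α * (γ * (γ+1) * (1+t) ^ (-γ-2))) t := by
  intro t ht
  have h1 : HasDerivAt (fun t : ℝ => 1 + t) 1 t := by
    simpa using (hasDerivAt_id t).const_add (1:ℝ)
  have h0 : (1:ℝ) + t ≠ 0 := by simp only [mem_Ici] at ht; positivity
  have h2 := ((h1.rpow_const (p := -γ-1) (Or.inl h0)).const_mul (-γ)).const_mul α
  rw [show -γ-1-1 = -γ-2 by ring] at h2
  exact h2.congr_deriv (by ring)

include hγ hα in
theorem pow_hmono : ∀ ⦃x y : ℝ⦄, 0 ≤ x → x ≤ y →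
    α * (-γ * (1+x) ^ (-γ-1)) ≤ α * (-γ * (1+y) ^ (-γ-1)) := by
  intro x y hx hxy
  have := Real.rpow_le_rpow_of_nonpos (by linarith : (0:ℝ) < 1 + x) (by linarith : 1+x ≤ 1+y)
    (by linarith : -γ-1 ≤ 0)
  have h2 := mul_le_mul_of_nonneg_left this (by positivity : (0:ℝ) ≤ α * γ)
  nlinarith [h2]

include hγ hα in
theorem pow_hL : ∀ t ∈ Ici (0:ℝ), |α * (-γ * (1+t) ^ (-γ-1))| ≤ α * γ := by
  intro t ht
  simp only [mem_Ici] at ht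
  have hpos : (0:ℝ) < (1+t) ^ (-γ-1) := Real.rpow_pos_of_pos (by linarith) _
  have hle : (1+t) ^ (-γ-1) ≤ 1 :=
    Real.rpow_le_one_of_one_le_of_nonpos (by linarith) (by linarith)
  rw [abs_mul, abs_mul, abs_of_pos hα, abs_neg, abs_of_pos hγ, abs_of_pos hpos]
  have h2 := mul_le_mul_of_nonneg_left hle (by positivity : (0:ℝ) ≤ α * γ)
  nlinarith [h2]

include hγ hα in
theorem pow_hM : ∀ x ∈ Ici (0:ℝ), ∀ y ∈ Ici (0:ℝ),
    |α * (-γ * (1+x) ^ (-γ-1)) - α * (-γ * (1+y) ^ (-γ-1))| ≤ (α * (γ*(γ+1))) * |x - y| := by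
  intro x hx y hy
  apply lipOn (g' := fun t => α * (γ * (γ+1) * (1+t) ^ (-γ-2))) (pow_hd' hγ) _ hx hy
  intro t ht
  simp only [mem_Ici] at ht
  have hpos : (0:ℝ) < (1+t) ^ (-γ-2) := Real.rpow_pos_of_pos (by linarith) _
  have hle : (1+t) ^ (-γ-2) ≤ 1 :=
    Real.rpow_le_one_of_one_le_of_nonpos (by linarith) (by linarith)
  rw [abs_mul, abs_of_pos hα, abs_mul, abs_of_pos (by positivity : (0:ℝ) < γ*(γ+1)),
    abs_of_pos hpos]
  have h2 := mul_le_mul_of_nonneg_left hle (by positivity : (0:ℝ) ≤ α * (γ*(γ+1)))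
  nlinarith [h2]

include hγ hα in
theorem pow_hB : ∀ t ∈ Ici (0:ℝ), |α * (1+t) ^ (-γ)| ≤ α := by
  intro t ht
  simp only [mem_Ici] at ht
  have hpos : (0:ℝ) < (1+t) ^ (-γ) := Real.rpow_pos_of_pos (by linarith) _
  have hle : (1+t) ^ (-γ) ≤ 1 :=
    Real.rpow_le_one_of_one_le_of_nonpos (by linarith) (by linarith)
  rw [abs_mul, abs_of_pos hα, abs_of_pos hpos]
  have h2 := mul_le_mul_of_nonneg_left hle hα.le
  nlinarith [h2]

end power

noncomputable def Igam (s γ : ℝ) : ℝ :=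
  ∫ σ in Ioi (0:ℝ), (1 - (1+σ^2) ^ (-γ)) * σ ^ (-(1+2*s))

theorem Jint_pow {s γ α : ℝ} (t : ℝ) (ht : 0 ≤ t) :
    Jint s (fun t => α * (1+t) ^ (-γ)) t = -(α * Igam s γ) * (1+t) ^ (-(γ+s)) := by
  have h1t : (0:ℝ) < 1 + t := by linarith
  set c := Real.sqrt (1+t) with hcdef
  have hc : 0 < c := Real.sqrt_pos.2 h1t
  have hc2 : c^2 = 1 + t := Real.sq_sqrt h1t.le
  set f : ℝ → ℝ := fun τ => (α * (1 + t + τ^2) ^ (-γ) - α * (1+t) ^ (-γ)) * τ ^ (-(1 + 2*s))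
    with hfdef
  have key := integral_comp_mul_left_Ioi f 0 hc
  rw [mul_zero] at key
  have hJ : Jint s (fun t => α * (1+t) ^ (-γ)) t = ∫ τ in Ioi (0:ℝ), f τ := by
    rw [Jint]
    apply setIntegral_congr_fun measurableSet_Ioi
    intro τ _
    simp only [hfdef]
    ring_nf
  have hpt : ∀ σ ∈ Ioi (0:ℝ), f (c * σ)
      = (α * (1+t) ^ (-γ) * c ^ (-(1+2*s))) *
        (((1+σ^2) ^ (-γ) - 1) * σ ^ (-(1+2*s))) := by
    intro σ hσ
    have hσ0 : (0:ℝ) < σ := hσ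
    have e1 : 1 + t + (c*σ)^2 = (1+t) * (1+σ^2) := by rw [mul_pow, hc2]; ring
    have e2 : ((1+t) * (1+σ^2)) ^ (-γ) = (1+t) ^ (-γ) * (1+σ^2) ^ (-γ) :=
      Real.mul_rpow h1t.le (by positivity)
    have e3 : (c*σ) ^ (-(1+2*s)) = c ^ (-(1+2*s)) * σ ^ (-(1+2*s)) :=
      Real.mul_rpow hc.le hσ0.le
    simp only [hfdef]
    rw [e1, e2, e3]
    ring
  have hint2 : ∫ σ in Ioi (0:ℝ), f (c * σ)
      = (α * (1+t) ^ (-γ) * c ^ (-(1+2*s))) * (-(Igam s γ)) := by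
    rw [setIntegral_congr_fun measurableSet_Ioi hpt, integral_const_mul]
    congr 1
    rw [Igam, ← integral_neg]
    apply setIntegral_congr_fun measurableSet_Ioi
    intro σ _
    ring
  rw [hint2] at key
  have hI : ∫ τ in Ioi (0:ℝ), f τ
      = c * (α * (1+t) ^ (-γ) * c ^ (-(1+2*s)) * -Igam s γ) := by
    rw [key, smul_eq_mul, ← mul_assoc, mul_inv_cancel₀ hc.ne', one_mul]
  rw [hJ, hI]
  have hcc : c * c ^ (-(1+2*s)) = (1+t) ^ (-s) := by
    have h1 : c * c ^ (-(1+2*s)) = c ^ (1 + -(1+2*s)) := by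
      rw [Real.rpow_add hc, Real.rpow_one]
    rw [h1, show (1:ℝ) + -(1+2*s) = -(2*s) by ring, hcdef, Real.sqrt_eq_rpow,
      ← Real.rpow_mul h1t.le, show (1/2) * -(2*s) = -s by ring]
  have hsplit : (1+t) ^ (-(γ+s)) = (1+t) ^ (-γ) * (1+t) ^ (-s) := by
    rw [← Real.rpow_add h1t, show -γ + -s = -(γ+s) by ring]
  rw [hsplit, show c * (α * (1+t) ^ (-γ) * c ^ (-(1+2*s)) * -Igam s γ)
      = (c * c ^ (-(1+2*s))) * (α * (1+t) ^ (-γ) * -Igam s γ) by ring, hcc]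
  ring

theorem gauss_pt {b β : ℝ} (t τ : ℝ) :
    b * Real.exp (-β * (t + τ^2)) - b * Real.exp (-β * t)
      = (b * Real.exp (-β * t)) * (Real.exp (-β * τ^2) - 1) := by
  rw [show -β * (t + τ^2) = -β*t + -β*τ^2 by ring, Real.exp_add]
  ring

noncomputable def cg (s β : ℝ) : ℝ :=
  ∫ σ in Ioi (0:ℝ), (1 - Real.exp (-β * σ^2)) * σ ^ (-(1+2*s))

theorem Jint_gauss {s b β : ℝ} (t : ℝ) :
    Jint s (fun t => b * Real.exp (-β * t)) t = -(b * Real.exp (-β * t)) * cg s β := by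
  rw [Jint, cg, ← integral_const_mul]
  apply setIntegral_congr_fun measurableSet_Ioi
  intro τ _
  dsimp only
  rw [gauss_pt]
  ring

theorem cg_scale {s β : ℝ} (hβ : 0 < β) : cg s β = β ^ s * cg s 1 := by
  set c := (Real.sqrt β)⁻¹ with hcdef
  have hsq : 0 < Real.sqrt β := Real.sqrt_pos.2 hβ
  have hc : 0 < c := inv_pos.2 hsq
  have hc2 : β * c^2 = 1 := by
    rw [hcdef, inv_pow, Real.sq_sqrt hβ.le, mul_inv_cancel₀ hβ.ne']
  set f : ℝ → ℝ := fun τ => (1 - Real.exp (-β * τ^2)) * τ ^ (-(1+2*s)) with hfdef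
  have key := integral_comp_mul_left_Ioi f 0 hc
  rw [mul_zero] at key
  have hpt : ∀ σ ∈ Ioi (0:ℝ), f (c * σ)
      = c ^ (-(1+2*s)) * ((1 - Real.exp (-1 * σ^2)) * σ ^ (-(1+2*s))) := by
    intro σ hσ
    have hσ0 : (0:ℝ) < σ := hσ
    have e1 : -β * (c*σ)^2 = -1 * σ^2 := by rw [mul_pow]; nlinarith [hc2]
    have e3 : (c*σ) ^ (-(1+2*s)) = c ^ (-(1+2*s)) * σ ^ (-(1+2*s)) :=
      Real.mul_rpow hc.le hσ0.le
    simp only [hfdef]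
    rw [e1, e3]
    ring
  rw [setIntegral_congr_fun measurableSet_Ioi hpt, integral_const_mul] at key
  have hcg1 : cg s 1 = ∫ σ in Ioi (0:ℝ), (1 - Real.exp (-1 * σ^2)) * σ ^ (-(1+2*s)) := rfl
  have hI : cg s β = c * (c ^ (-(1+2*s)) * cg s 1) := by
    rw [cg, show (∫ σ in Ioi (0:ℝ), (1 - Real.exp (-β * σ^2)) * σ ^ (-(1+2*s)))
        = ∫ τ in Ioi (0:ℝ), f τ from rfl, hcg1]
    rw [eq_comm, smul_eq_mul, inv_mul_eq_iff_eq_mul₀ hc.ne'] at key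
    exact key
  rw [hI, ← mul_assoc]
  congr 1
  have h1 : c * c ^ (-(1+2*s)) = c ^ (-(2*s)) := by
    rw [show -(2*s) = 1 + -(1+2*s) by ring, Real.rpow_add hc, Real.rpow_one]
  rw [h1, hcdef, ← Real.rpow_neg_one (Real.sqrt β), ← Real.rpow_mul hsq.le,
    show (-1:ℝ) * -(2*s) = 2*s by ring, Real.sqrt_eq_rpow, ← Real.rpow_mul hβ.le,
    show (1/2:ℝ) * (2*s) = s by ring]

-- gaussian derivatives
theorem gauss_hd {b β : ℝ} : ∀ t ∈ Ici (0:ℝ),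
    HasDerivAt (fun t : ℝ => b * Real.exp (-β * t)) (b * (-β * Real.exp (-β * t))) t := by
  intro t _
  have h1 : HasDerivAt (fun t : ℝ => -β * t) (-β) t := by
    simpa using (hasDerivAt_id t).const_mul (-β)
  have h2 := (h1.exp).const_mul b
  exact h2.congr_deriv (by ring)

theorem gauss_hd' {b β : ℝ} : ∀ t ∈ Ici (0:ℝ),
    HasDerivAt (fun t : ℝ => b * (-β * Real.exp (-β * t)))
      (b * (β^2 * Real.exp (-β * t))) t := by
  intro t _
  have h1 : HasDerivAt (fun t : ℝ => -β * t) (-β) t := by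
    simpa using (hasDerivAt_id t).const_mul (-β)
  have h2 := ((h1.exp).const_mul (-β)).const_mul b
  exact h2.congr_deriv (by ring)

theorem gauss_hmono {b β : ℝ} (hb : 0 < b) (hβ : 0 < β) : ∀ ⦃x y : ℝ⦄, 0 ≤ x → x ≤ y →
    b * (-β * Real.exp (-β * x)) ≤ b * (-β * Real.exp (-β * y)) := by
  intro x y hx hxy
  have h1 : Real.exp (-β * y) ≤ Real.exp (-β * x) := Real.exp_le_exp.2 (by nlinarith)
  nlinarith [mul_le_mul_of_nonneg_left h1 (by positivity : (0:ℝ) ≤ b * β)]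

theorem gauss_hL {b β : ℝ} (hb : 0 < b) (hβ : 0 < β) :
    ∀ t ∈ Ici (0:ℝ), |b * (-β * Real.exp (-β * t))| ≤ b * β := by
  intro t ht
  simp only [mem_Ici] at ht
  have h1 : Real.exp (-β * t) ≤ 1 := Real.exp_le_one_iff.2 (by nlinarith)
  have h2 : (0:ℝ) < Real.exp (-β * t) := Real.exp_pos _
  rw [abs_mul, abs_of_pos hb, abs_mul, abs_neg, abs_of_pos hβ, abs_of_pos h2]
  nlinarith [mul_le_mul_of_nonneg_left h1 (by positivity : (0:ℝ) ≤ b * β)]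

theorem gauss_hM {b β : ℝ} (hb : 0 < b) (hβ : 0 < β) :
    ∀ x ∈ Ici (0:ℝ), ∀ y ∈ Ici (0:ℝ),
      |b * (-β * Real.exp (-β * x)) - b * (-β * Real.exp (-β * y))| ≤ (b * β^2) * |x - y| := by
  intro x hx y hy
  apply lipOn gauss_hd' _ hx hy
  intro t ht
  simp only [mem_Ici] at ht
  have h1 : Real.exp (-β * t) ≤ 1 := Real.exp_le_one_iff.2 (by nlinarith)
  have h2 : (0:ℝ) < Real.exp (-β * t) := Real.exp_pos _
  rw [abs_mul, abs_of_pos hb, abs_mul, abs_of_pos (by positivity : (0:ℝ) < β^2),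
    abs_of_pos h2]
  nlinarith [mul_le_mul_of_nonneg_left h1 (by positivity : (0:ℝ) ≤ b * β^2)]

theorem gauss_hB {b β : ℝ} (hb : 0 < b) (hβ : 0 < β) :
    ∀ t ∈ Ici (0:ℝ), |b * Real.exp (-β * t)| ≤ b := by
  intro t ht
  simp only [mem_Ici] at ht
  have h1 : Real.exp (-β * t) ≤ 1 := Real.exp_le_one_iff.2 (by nlinarith)
  have h2 : (0:ℝ) < Real.exp (-β * t) := Real.exp_pos _
  rw [abs_mul, abs_of_pos hb, abs_of_pos h2]
  nlinarith

theorem one_sub_rpow_le {γ : ℝ} (hγ : 0 < γ) {u : ℝ} (hu : 0 ≤ u) :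
    1 - (1+u) ^ (-γ) ≤ γ * u := by
  have h := lipOn (pow_hd (α := (1:ℝ)) hγ) (pow_hL hγ one_pos) hu (le_refl (0:ℝ))
  simp only [add_zero, Real.one_rpow, one_mul, sub_zero] at h
  rw [abs_of_nonneg hu] at h
  have h2 : 1 - (1+u) ^ (-γ) ≤ |(1+u) ^ (-γ) - 1| := by
    rw [abs_sub_comm]
    exact le_abs_self _
  exact h2.trans h

theorem Igam_integrable {s γ : ℝ} (hs2 : 1/2 < s) (hs1 : s < 1) (hγ : 0 < γ) :
    IntegrableOn (fun σ : ℝ => (1 - (1+σ^2) ^ (-γ)) * σ ^ (-(1+2*s))) (Ioi (0:ℝ)) := by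
  refine integrableCore hs2 hs1 (C₁ := γ) (C₂ := 1) ?_ (fun σ _ => ?_) (fun σ _ => ?_)
  · have hcont : Continuous (fun σ : ℝ => (1+σ^2) ^ (-γ)) := by
      rw [continuous_iff_continuousAt]
      intro σ
      have hin : ContinuousAt (fun σ : ℝ => 1+σ^2) σ :=
        (continuous_const.add (continuous_id.pow 2)).continuousAt
      exact ContinuousAt.comp (g := fun t : ℝ => t ^ (-γ))
        (Real.continuousAt_rpow_const _ _ (Or.inl (by positivity : (1:ℝ)+σ^2 ≠ 0))) hin
    exact (continuous_const.sub hcont).continuousOn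
  · have hb := one_sub_rpow_le hγ (sq_nonneg σ)
    have h0 : 0 ≤ 1 - (1+σ^2) ^ (-γ) := by
      have := Real.rpow_le_one_of_one_le_of_nonpos
        (by nlinarith [sq_nonneg σ] : (1:ℝ) ≤ 1+σ^2) (by linarith : -γ ≤ 0)
      linarith
    rw [abs_of_nonneg h0]
    linarith [hb]
  · have h0 : 0 ≤ 1 - (1+σ^2) ^ (-γ) := by
      have := Real.rpow_le_one_of_one_le_of_nonpos
        (by nlinarith [sq_nonneg σ] : (1:ℝ) ≤ 1+σ^2) (by linarith : -γ ≤ 0)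
      linarith
    rw [abs_of_nonneg h0]
    have := Real.rpow_pos_of_pos (by positivity : (0:ℝ) < 1+σ^2) (-γ)
    linarith

theorem Igam_pos {s γ : ℝ} (hs2 : 1/2 < s) (hs1 : s < 1) (hγ : 0 < γ) : 0 < Igam s γ := by
  rw [Igam, setIntegral_pos_iff_support_of_nonneg_ae]
  · refine lt_of_lt_of_le ?_ (measure_mono (?_ :
      Ioi (0:ℝ) ⊆ Function.support (fun σ : ℝ => (1 - (1+σ^2) ^ (-γ)) * σ ^ (-(1+2*s))) ∩ Ioi 0))
    · rw [Real.volume_Ioi]; exact ENNReal.zero_lt_top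
    · intro σ hσ
      have hσ0 : (0:ℝ) < σ := hσ
      refine ⟨?_, hσ⟩
      have h1 : (1+σ^2) ^ (-γ) < 1 :=
        Real.rpow_lt_one_of_one_lt_of_neg (by nlinarith) (by linarith)
      have h2 : (0:ℝ) < σ ^ (-(1+2*s)) := Real.rpow_pos_of_pos hσ0 _
      simp only [Function.mem_support]
      exact ne_of_gt (mul_pos (by linarith) h2)
  · filter_upwards [ae_restrict_mem measurableSet_Ioi] with σ hσ
    have hσ0 : (0:ℝ) < σ := hσ
    have h1 : (1+σ^2) ^ (-γ) ≤ 1 :=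
      Real.rpow_le_one_of_one_le_of_nonpos (by nlinarith [sq_nonneg σ]) (by linarith)
    have h2 : (0:ℝ) ≤ σ ^ (-(1+2*s)) := Real.rpow_nonneg hσ0.le _
    exact mul_nonneg (by linarith) h2
  · exact Igam_integrable hs2 hs1 hγ

theorem cg_integrable {s β : ℝ} (hs2 : 1/2 < s) (hs1 : s < 1) (hβ : 0 < β) :
    IntegrableOn (fun σ : ℝ => (1 - Real.exp (-β * σ^2)) * σ ^ (-(1+2*s))) (Ioi (0:ℝ)) := by
  refine integrableCore hs2 hs1 (C₁ := β) (C₂ := 1) ?_ (fun σ _ => ?_) (fun σ _ => ?_)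
  · exact (continuous_const.sub
      (Real.continuous_exp.comp ((continuous_const.mul (continuous_id.pow 2))))).continuousOn
  · have h1 : -β * σ^2 + 1 ≤ Real.exp (-β * σ^2) := Real.add_one_le_exp _
    have h0 : 0 ≤ 1 - Real.exp (-β * σ^2) := by
      have := Real.exp_le_one_iff.2 (by nlinarith [sq_nonneg σ] : -β * σ^2 ≤ 0)
      linarith
    rw [abs_of_nonneg h0]
    nlinarith
  · have h0 : 0 ≤ 1 - Real.exp (-β * σ^2) := by
      have := Real.exp_le_one_iff.2 (by nlinarith [sq_nonneg σ] : -β * σ^2 ≤ 0)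
      linarith
    rw [abs_of_nonneg h0]
    linarith [Real.exp_pos (-β * σ^2)]

theorem cg_pos {s β : ℝ} (hs2 : 1/2 < s) (hs1 : s < 1) (hβ : 0 < β) : 0 < cg s β := by
  rw [cg, setIntegral_pos_iff_support_of_nonneg_ae]
  · refine lt_of_lt_of_le ?_ (measure_mono (?_ :
      Ioi (0:ℝ) ⊆ Function.support (fun σ : ℝ => (1 - Real.exp (-β * σ^2)) * σ ^ (-(1+2*s))) ∩ Ioi 0))
    · rw [Real.volume_Ioi]; exact ENNReal.zero_lt_top
    · intro σ hσ
      have hσ0 : (0:ℝ) < σ := hσ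
      refine ⟨?_, hσ⟩
      have h1 : Real.exp (-β * σ^2) < 1 :=
        Real.exp_lt_one_iff.2 (by nlinarith [mul_pos hβ (pow_pos hσ0 2)])
      have h2 : (0:ℝ) < σ ^ (-(1+2*s)) := Real.rpow_pos_of_pos hσ0 _
      simp only [Function.mem_support]
      exact ne_of_gt (mul_pos (by linarith) h2)
  · filter_upwards [ae_restrict_mem measurableSet_Ioi] with σ hσ
    have hσ0 : (0:ℝ) < σ := hσ
    have h1 : Real.exp (-β * σ^2) ≤ 1 := Real.exp_le_one_iff.2 (by nlinarith [sq_nonneg σ])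
    have h2 : (0:ℝ) ≤ σ ^ (-(1+2*s)) := Real.rpow_nonneg hσ0.le _
    exact mul_nonneg (by linarith) h2
  · exact cg_integrable hs2 hs1 hβ


theorem power_sol (N k : ℕ) (hk1 : 1 ≤ k) (hkN : k < N) {s Cs : ℝ}
    (hs2 : 1/2 < s) (hs1 : s < 1) (hCs : 0 < Cs) {p : ℝ} (hp : 1 < p) :
    ∃ α > (0:ℝ), ∀ x : E N,
      IkMinus N k s Cs (fun y => α * (1 + ‖y‖^2) ^ (-(s / (p - 1)))) x +
        (α * (1 + ‖x‖^2) ^ (-(s / (p - 1)))) ^ p = 0 := by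
  set γ := s / (p - 1) with hγdef
  have hγ : 0 < γ := div_pos (by linarith) (by linarith)
  have hIg : 0 < Igam s γ := Igam_pos hs2 hs1 hγ
  have hA : 0 < 2*(k:ℝ)*Cs*Igam s γ := by
    have : (0:ℝ) < (k:ℝ) := by exact_mod_cast hk1.trans_lt' Nat.zero_lt_one
    positivity
  set α := (2*(k:ℝ)*Cs*Igam s γ) ^ (1/(p-1)) with hαdef
  have hα : 0 < α := Real.rpow_pos_of_pos hA _
  refine ⟨α, hα, fun x => ?_⟩
  have key : IkMinus N k s Cs (fun y => α * (1 + ‖y‖^2) ^ (-γ)) x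
      = (k:ℝ) * (2 * Cs * Jint s (fun t => α * (1+t) ^ (-γ)) (‖x‖^2)) :=
    IkMinus_eq hs2 hs1 (pow_hd hγ) (pow_hmono hγ hα) (pow_hL hγ hα) (pow_hM hγ hα)
      (pow_hB hγ hα) k hkN Cs hCs x
  rw [key, Jint_pow (‖x‖^2) (by positivity)]
  have hX : (0:ℝ) < 1 + ‖x‖^2 := by positivity
  have hγs : γ * (p-1) = s := div_mul_cancel₀ s (by linarith : p - 1 ≠ 0)
  have hexp : (-γ) * p = -(γ+s) := by linear_combination -hγs
  have hupow : (α * (1 + ‖x‖^2) ^ (-γ)) ^ p = α ^ p * (1 + ‖x‖^2) ^ (-(γ+s)) := by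
    rw [Real.mul_rpow hα.le (Real.rpow_nonneg hX.le _), ← Real.rpow_mul hX.le, hexp]
  have hαp : α ^ p = (2*(k:ℝ)*Cs*Igam s γ) * α := by
    have h1 : α ^ (p-1) = 2*(k:ℝ)*Cs*Igam s γ := by
      rw [hαdef, ← Real.rpow_mul hA.le,
        one_div_mul_cancel (by linarith : p - 1 ≠ 0), Real.rpow_one]
    rw [show p = (p-1) + 1 by ring, Real.rpow_add hα, Real.rpow_one, h1]
  rw [hupow, hαp]
  ring

theorem gauss_sol (N k : ℕ) (hk1 : 1 ≤ k) (hkN : k < N) {s Cs : ℝ}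
    (hs2 : 1/2 < s) (hs1 : s < 1) (hCs : 0 < Cs) :
    ∃ β > (0:ℝ), ∃ b > (0:ℝ), ∀ x : E N,
      IkMinus N k s Cs (fun y => b * Real.exp (-β * ‖y‖^2)) x +
        b * Real.exp (-β * ‖x‖^2) = 0 := by
  have hc1 : 0 < cg s 1 := cg_pos hs2 hs1 one_pos
  have hk0 : (0:ℝ) < (k:ℝ) := by exact_mod_cast hk1.trans_lt' Nat.zero_lt_one
  have hXpos : 0 < 2*(k:ℝ)*Cs*cg s 1 := by positivity
  set β := (2*(k:ℝ)*Cs*cg s 1) ^ (-(1/s)) with hβdef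
  have hβ : 0 < β := Real.rpow_pos_of_pos hXpos _
  have hβs : β ^ s = (2*(k:ℝ)*Cs*cg s 1)⁻¹ := by
    rw [hβdef, ← Real.rpow_mul hXpos.le, show (-(1/s)) * s = -1 by
      rw [neg_mul, one_div_mul_cancel (by linarith : s ≠ 0)], Real.rpow_neg_one]
  refine ⟨β, hβ, 1, one_pos, fun x => ?_⟩
  have key : IkMinus N k s Cs (fun y => (1:ℝ) * Real.exp (-β * ‖y‖^2)) x
      = (k:ℝ) * (2 * Cs * Jint s (fun t => (1:ℝ) * Real.exp (-β * t)) (‖x‖^2)) :=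
    IkMinus_eq hs2 hs1 gauss_hd (gauss_hmono one_pos hβ) (gauss_hL one_pos hβ)
      (gauss_hM one_pos hβ) (gauss_hB one_pos hβ) k hkN Cs hCs x
  rw [key, Jint_gauss, cg_scale hβ, hβs]
  have hprod : (2*(k:ℝ)*Cs*cg s 1) * (2*(k:ℝ)*Cs*cg s 1)⁻¹ = 1 :=
    mul_inv_cancel₀ (ne_of_gt hXpos)
  linear_combination (-(Real.exp (-β * ‖x‖^2))) * hprod

theorem stmt_15 (N k : ℕ) (hN : 2 ≤ N) (hk1 : 1 ≤ k) (hkN : k < N)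
    (s Cs : ℝ) (hs : s ∈ Ioo (1/2 : ℝ) 1) (hCs : 0 < Cs)
    (p : ℝ) (hp : 1 ≤ p) :
    (∃ u : E N → ℝ, (∀ x, 0 < u x) ∧ (∃ M : ℝ, ∀ x, u x ≤ M) ∧
      ContDiff ℝ 2 u ∧ ∀ x : E N, IkMinus N k s Cs u x + u x ^ p = 0) ∧
    (1 < p → ∃ α > (0:ℝ), ∀ x : E N,
      IkMinus N k s Cs (fun y => α * (1 + ‖y‖^2) ^ (-(s / (p - 1)))) x +
        (α * (1 + ‖x‖^2) ^ (-(s / (p - 1)))) ^ p = 0) ∧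
    (p = 1 → ∃ β > (0:ℝ), ∃ b > (0:ℝ), ∀ x : E N,
      IkMinus N k s Cs (fun y => b * Real.exp (-β * ‖y‖^2)) x +
        b * Real.exp (-β * ‖x‖^2) = 0) := by
  obtain ⟨hs2, hs1⟩ := hs
  refine ⟨?_, fun hp1 => power_sol N k hk1 hkN hs2 hs1 hCs hp1,
    fun _ => gauss_sol N k hk1 hkN hs2 hs1 hCs⟩
  rcases eq_or_lt_of_le hp with heq | hp1
  · -- p = 1 : gaussian solution
    obtain ⟨β, hβ, b, hb, hsol⟩ := gauss_sol N k hk1 hkN hs2 hs1 hCs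
    refine ⟨fun y => b * Real.exp (-β * ‖y‖^2), fun x => mul_pos hb (Real.exp_pos _),
      ⟨b, fun x => ?_⟩, ?_, fun x => ?_⟩
    · have h1 : Real.exp (-β * ‖x‖^2) ≤ 1 := Real.exp_le_one_iff.2
        (by nlinarith [mul_nonneg hβ.le (sq_nonneg ‖x‖)])
      show b * Real.exp (-β * ‖x‖^2) ≤ b
      nlinarith [mul_le_mul_of_nonneg_left h1 hb.le]
    · have h1 : ContDiff ℝ 2 (fun y : E N => -β * ‖y‖^2) :=
        contDiff_const.mul (contDiff_norm_sq ℝ)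
      exact contDiff_const.mul (Real.contDiff_exp.comp h1)
    · rw [← heq, Real.rpow_one]
      exact hsol x
  · -- p > 1 : power solution
    obtain ⟨α, hα, hsol⟩ := power_sol N k hk1 hkN hs2 hs1 hCs hp1
    have hγ : 0 < s / (p-1) := div_pos (by linarith) (by linarith)
    refine ⟨fun y => α * (1 + ‖y‖^2) ^ (-(s / (p - 1))), fun x => ?_, ⟨α, fun x => ?_⟩,
      ?_, fun x => hsol x⟩
    · exact mul_pos hα (Real.rpow_pos_of_pos (by positivity) _)
    · have h1 : (1 + ‖x‖^2 : ℝ) ^ (-(s/(p-1))) ≤ 1 :=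
        Real.rpow_le_one_of_one_le_of_nonpos (by nlinarith [sq_nonneg ‖x‖]) (by linarith)
      show α * (1 + ‖x‖^2) ^ (-(s / (p - 1))) ≤ α
      nlinarith [mul_le_mul_of_nonneg_left h1 hα.le]
    · have h1 : ContDiff ℝ 2 (fun y : E N => 1 + ‖y‖^2) :=
        contDiff_const.add (contDiff_norm_sq ℝ)
      rw [contDiff_iff_contDiffAt]
      intro x
      exact contDiffAt_const.mul ((h1.contDiffAt).rpow_const_of_ne
        (by positivity : (1:ℝ) + ‖x‖^2 ≠ 0))
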